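/- Let d ≥ 1 be an integer, let s > 0 with 1/s a positive integer, tessellate [0,1]^d into the s^{−d} cells of side s, let P be a set of n points of [0,1]^d none lying on a cell boundary, and set K := s^d·n. Let Γ be the graph whose vertices are the cells dense with respect to P, with two cells adjacent whenever they are friends. Then every connected component γ of Γ with fewer than n^{1/d}/(4K^{1/d}) vertices has the property that at least 2^d − 1 distinct cells sparse with respect to P are friends with some cell of γ. -/

import Mathlib

/-- The half-open cell of the side-`1/m` tessellation of `[0,1]^d` indexed by `v`. -/
def cell (d m : ℕ) (v : Fin d → Fin m) : Set (EuclideanSpace ℝ (Fin d)) :=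
  {x | ∀ k : Fin d, (v k : ℝ) / m ≤ x k ∧ x k < ((v k : ℝ) + 1) / m}

/-- Two cells are friends if their closures intersect. -/
def IsFriend (d m : ℕ) (v w : Fin d → Fin m) : Prop :=
  (closure (cell d m v) ∩ closure (cell d m w)).Nonempty

/-- A cell is sparse with respect to the points `x` if it contains at most `R = 2·3^d`
of them. -/
def IsSparse (d m n : ℕ) (x : Fin n → EuclideanSpace ℝ (Fin d))
    (v : Fin d → Fin m) : Prop :=
  {i : Fin n | x i ∈ cell d m v}.ncard ≤ 2 * 3 ^ d

/-- The graph `Γ` whose vertices are the dense cells, two of them adjacent whenever they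
are friends. -/
def denseGraph (d m n : ℕ) (x : Fin n → EuclideanSpace ℝ (Fin d)) :
    SimpleGraph {v : Fin d → Fin m // ¬ IsSparse d m n x v} :=
  SimpleGraph.fromRel fun v w => IsFriend d m v.1 w.1

lemma closure_cell_subset_box (d m : ℕ) (v : Fin d → Fin m) :
    closure (cell d m v) ⊆
      {x : EuclideanSpace ℝ (Fin d) | ∀ k, (v k : ℝ)/m ≤ x k ∧ x k ≤ ((v k : ℝ)+1)/m} := by
  apply closure_minimal
  · intro x hx k; exact ⟨(hx k).1, (hx k).2.le⟩
  · have : {x : EuclideanSpace ℝ (Fin d) | ∀ k, (v k : ℝ)/m ≤ x k ∧ x k ≤ ((v k:ℝ)+1)/m}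
        = ⋂ k, {x : EuclideanSpace ℝ (Fin d) | (v k : ℝ)/m ≤ x k ∧ x k ≤ ((v k:ℝ)+1)/m} := by
      ext x; simp [Set.mem_iInter]
    rw [this]
    exact isClosed_iInter fun k =>
      IsClosed.inter (s₁ := {x : EuclideanSpace ℝ (Fin d) | (v k : ℝ)/m ≤ x k})
        (s₂ := {x : EuclideanSpace ℝ (Fin d) | x k ≤ ((v k:ℝ)+1)/m})
        (isClosed_le (g := fun x : EuclideanSpace ℝ (Fin d) => x k) continuous_const (by fun_prop))
        (isClosed_le (f := fun x : EuclideanSpace ℝ (Fin d) => x k) (by fun_prop) continuous_const)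

lemma box_subset_closure_cell (d m : ℕ) (hm : 0 < m) (v : Fin d → Fin m)
    {x : EuclideanSpace ℝ (Fin d)}
    (hx : ∀ k, (v k : ℝ)/m ≤ x k ∧ x k ≤ ((v k : ℝ)+1)/m) :
    x ∈ closure (cell d m v) := by
  rw [Metric.mem_closure_iff]
  intro ε hε
  have hmR : (0:ℝ) < m := by exact_mod_cast hm
  set δ : ℝ := min (ε / (2 * (d+1))) (1/(2*m)) with hδdef
  have hδpos : 0 < δ := lt_min (by positivity) (by positivity)
  have hδm : δ ≤ 1/(2*m) := min_le_right _ _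
  have hδε : δ ≤ ε / (2*(d+1)) := min_le_left _ _
  have hδ1m : δ ≤ 1/m := hδm.trans (by rw [div_le_div_iff₀ (by positivity) hmR]; nlinarith)
  refine ⟨(WithLp.toLp 2 (fun k => min (x k) (((v k : ℝ)+1)/m - δ)) : EuclideanSpace ℝ (Fin d)), ?_, ?_⟩
  · intro k
    refine ⟨le_min (hx k).1 ?_, lt_of_le_of_lt (min_le_right _ _) (by linarith)⟩
    have : (1:ℝ)/m ≤ ((v k:ℝ)+1)/m - (v k:ℝ)/m := by rw [add_div]; ring_nf; exact le_refl _
    linarith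
  · have hcoord : ∀ k : Fin d,
        dist (x k) (min (x k) (((v k : ℝ)+1)/m - δ)) ≤ δ := by
      intro k
      rw [Real.dist_eq, abs_sub_le_iff]
      constructor
      · have : min (x k) (((v k : ℝ)+1)/m - δ) ≥ x k - δ := by
          apply le_min (by linarith)
          linarith [(hx k).2]
        linarith
      · have : min (x k) (((v k : ℝ)+1)/m - δ) ≤ x k := min_le_left _ _
        linarith
    have h1 : dist x (WithLp.toLp 2 (fun k => min (x k) (((v k : ℝ)+1)/m - δ)) : EuclideanSpace ℝ (Fin d))
        ≤ Real.sqrt (d * δ^2) := by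
      rw [EuclideanSpace.dist_eq]
      apply Real.sqrt_le_sqrt
      calc ∑ i : Fin d, dist (x i) _ ^ 2 ≤ ∑ _i : Fin d, δ^2 := by
            apply Finset.sum_le_sum
            intro i _
            exact pow_le_pow_left₀ dist_nonneg (hcoord i) 2
        _ = d * δ^2 := by simp [Finset.sum_const, mul_comm]
    have h2 : Real.sqrt (d * δ^2) ≤ (d+1) * δ := by
      rw [show (d:ℝ) * δ^2 = (Real.sqrt d * δ)^2 by
        rw [mul_pow, Real.sq_sqrt (by positivity)]]
      rw [Real.sqrt_sq (by positivity)]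
      have : Real.sqrt d ≤ d + 1 := by
        rw [show (d:ℝ)+1 = Real.sqrt ((d+1)^2) by rw [Real.sqrt_sq (by positivity)]]
        apply Real.sqrt_le_sqrt; nlinarith
      nlinarith
    have : ((d:ℝ)+1) * δ ≤ ε/2 := by
      calc ((d:ℝ)+1) * δ ≤ (d+1) * (ε / (2*(d+1))) := by nlinarith
        _ = ε/2 := by field_simp
    linarith

lemma isFriend_iff (d m : ℕ) (hm : 0 < m) (v w : Fin d → Fin m) :
    IsFriend d m v w ↔ ∀ k, (v k : ℕ) ≤ (w k : ℕ) + 1 ∧ (w k : ℕ) ≤ (v k : ℕ) + 1 := by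
  have hmR : (0:ℝ) < m := by exact_mod_cast hm
  constructor
  · rintro ⟨x, hv, hw⟩ k
    have h1 := closure_cell_subset_box d m v hv k
    have h2 := closure_cell_subset_box d m w hw k
    constructor
    · have h3 : (v k : ℝ) ≤ (w k : ℝ) + 1 := by
        have h4 := h1.1.trans h2.2
        rw [div_le_div_iff₀ hmR hmR] at h4
        nlinarith
      exact_mod_cast h3
    · have h3 : (w k : ℝ) ≤ (v k : ℝ) + 1 := by
        have h4 := h2.1.trans h1.2
        rw [div_le_div_iff₀ hmR hmR] at h4
        nlinarith
      exact_mod_cast h3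
  · intro h
    refine ⟨(WithLp.toLp 2 (fun k => (max (v k : ℕ) (w k : ℕ) : ℝ)/m) : EuclideanSpace ℝ (Fin d)), ?_, ?_⟩
    · apply box_subset_closure_cell d m hm
      intro k
      constructor
      · dsimp only
        gcongr
        exact_mod_cast le_max_left _ _
      · dsimp only
        gcongr
        have := (h k).2
        have h5 : (max (v k : ℕ) (w k : ℕ) : ℕ) ≤ (v k : ℕ) + 1 := by omega
        exact_mod_cast h5
    · apply box_subset_closure_cell d m hm
      intro k
      constructor
      · dsimp only
        gcongr
        exact_mod_cast le_max_right _ _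
      · dsimp only
        gcongr
        have := (h k).1
        have h5 : (max (v k : ℕ) (w k : ℕ) : ℕ) ≤ (w k : ℕ) + 1 := by omega
        exact_mod_cast h5

lemma isFriend_symm (d m : ℕ) {v w : Fin d → Fin m} (h : IsFriend d m v w) :
    IsFriend d m w v := by
  rw [IsFriend, Set.inter_comm]; exact h

lemma walk_intermediate {V : Type*} {G : SimpleGraph V} (f : V → ℕ)
    (hadj : ∀ {a b : V}, G.Adj a b → f b ≤ f a + 1)
    {u w : V} (p : G.Walk u w) :
    ∀ c : ℕ, f u ≤ c → c ≤ f w → ∃ z ∈ p.support, f z = c := by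
  induction p with
  | nil => intro c h1 h2; exact ⟨_, by simp, le_antisymm h1 h2⟩
  | @cons a b w' h q ih =>
    intro c h1 h2
    by_cases hc : f a = c
    · exact ⟨a, by simp, hc⟩
    · obtain ⟨z, hz, hzc⟩ := ih c (by have := hadj h; omega) h2
      exact ⟨z, by simp [hz], hzc⟩

lemma mem_support_component {V : Type*} {G : SimpleGraph V} {u w z : V}
    (p : G.Walk u w) (hz : z ∈ p.support) :
    G.connectedComponentMk z = G.connectedComponentMk u := by
  classical
  exact SimpleGraph.ConnectedComponent.sound (p.takeUntil z hz).reachable.symm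

/-- Every connected component of `Γ` with fewer than `n^{1/d}/(4K^{1/d})` vertices has at
least `2^d - 1` sparse cells which are friends with some of its cells. -/
theorem small_component_has_many_sparse_friends (d : ℕ) (hd : 1 ≤ d)
    (m n : ℕ) (hm : 0 < m)
    (x : Fin n → EuclideanSpace ℝ (Fin d)) (hinj : Function.Injective x)
    (hx : ∀ i : Fin n, ∀ k : Fin d, x i k ∈ Set.Icc (0 : ℝ) 1)
    (hbd : ∀ i : Fin n, ∀ k : Fin d, ∀ j : ℕ, x i k * m ≠ j)
    (K : ℝ) (hK : K = (n : ℝ) / (m : ℝ) ^ d)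
    (γ : (denseGraph d m n x).ConnectedComponent)
    (hsmall : ({v : {v : Fin d → Fin m // ¬ IsSparse d m n x v} |
        (denseGraph d m n x).connectedComponentMk v = γ}.ncard : ℝ)
        < (n : ℝ) ^ ((1 : ℝ) / d) / (4 * K ^ ((1 : ℝ) / d))) :
    2 ^ d - 1 ≤
      {w : Fin d → Fin m | IsSparse d m n x w ∧
        ∃ c : {v : Fin d → Fin m // ¬ IsSparse d m n x v},
          (denseGraph d m n x).connectedComponentMk c = γ ∧
          IsFriend d m w c.1}.ncard := by
  classical
  have hfin : ({v : {v : Fin d → Fin m // ¬ IsSparse d m n x v} |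
      (denseGraph d m n x).connectedComponentMk v = γ}).Finite := Set.toFinite _
  set F := hfin.toFinset with hFdef
  have hFS : ∀ z, z ∈ F ↔ (denseGraph d m n x).connectedComponentMk z = γ := by
    intro z; rw [hFdef, Set.Finite.mem_toFinset]; rfl
  obtain ⟨v₀, hv₀⟩ := γ.exists_rep
  have hFne : F.Nonempty := ⟨v₀, (hFS v₀).2 hv₀⟩
  have hLF : ({v : {v : Fin d → Fin m // ¬ IsSparse d m n x v} |
      (denseGraph d m n x).connectedComponentMk v = γ}).ncard = F.card :=
    Set.ncard_eq_toFinset_card _ hfin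
  rw [hLF] at hsmall
  have hL1 : 1 ≤ F.card := Finset.card_pos.mpr hFne
  -- Step C : 4 * card < m
  have hLm : 4 * F.card < m := by
    rcases Nat.eq_zero_or_pos n with hn | hn
    · exfalso
      have h0 : ((n:ℝ)) ^ ((1:ℝ)/d) / (4 * K ^ ((1:ℝ)/d)) = 0 := by
        subst hn
        rw [Nat.cast_zero, Real.zero_rpow (by positivity : (1:ℝ)/d ≠ 0)]
        simp
      rw [h0] at hsmall
      have : (0:ℝ) ≤ (F.card:ℝ) := Nat.cast_nonneg _
      linarith
    · have hd0 : (d:ℝ) ≠ 0 := by positivity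
      have hn0 : (0:ℝ) < n := by exact_mod_cast hn
      have hmR : (0:ℝ) < m := by exact_mod_cast hm
      have hmd : (0:ℝ) < (m:ℝ)^d := by positivity
      have hnp : (0:ℝ) < (n:ℝ) ^ ((1:ℝ)/d) := Real.rpow_pos_of_pos hn0 _
      have e1 : K ^ ((1:ℝ)/d) = (n:ℝ)^((1:ℝ)/d) / (m:ℝ) := by
        rw [hK, Real.div_rpow hn0.le hmd.le]
        congr 1
        rw [← Real.rpow_natCast (m:ℝ) d, ← Real.rpow_mul hmR.le]
        rw [mul_one_div, div_self hd0, Real.rpow_one]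
      have e2 : (n:ℝ) ^ ((1:ℝ)/d) / (4 * ((n:ℝ)^((1:ℝ)/d) / (m:ℝ))) = m/4 := by
        field_simp
      rw [e1, e2] at hsmall
      have h4 : (4:ℝ) * F.card < m := by linarith
      exact_mod_cast h4
  -- projections
  have hAne : ∀ k : Fin d, (F.image (fun z => (z.1 k : ℕ))).Nonempty :=
    fun k => hFne.image _
  set a : Fin d → ℕ := fun k => (F.image (fun z => (z.1 k : ℕ))).min' (hAne k) with hadef
  set b : Fin d → ℕ := fun k => (F.image (fun z => (z.1 k : ℕ))).max' (hAne k) with hbdef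
  have haz : ∀ k, ∀ z ∈ F, a k ≤ (z.1 k : ℕ) := by
    intro k z hz
    exact Finset.min'_le (F.image (fun z => (z.1 k : ℕ))) _ (Finset.mem_image_of_mem _ hz)
  have hzb : ∀ k, ∀ z ∈ F, (z.1 k : ℕ) ≤ b k := by
    intro k z hz
    exact Finset.le_max' (F.image (fun z => (z.1 k : ℕ))) _ (Finset.mem_image_of_mem _ hz)
  have hab : ∀ k, a k ≤ b k := by
    intro k
    obtain ⟨z, hz⟩ := hFne
    exact (haz k z hz).trans (hzb k z hz)
  have hbm : ∀ k, b k < m := by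
    intro k
    obtain ⟨z, _, hz⟩ := Finset.mem_image.mp
      ((F.image (fun z => (z.1 k : ℕ))).max'_mem (hAne k))
    have h1 : (z.1 k : ℕ) = b k := hz
    have h2 := (z.1 k).isLt
    omega
  -- adjacency gives coordinate control
  have hadjco : ∀ {z₁ z₂ : {v : Fin d → Fin m // ¬ IsSparse d m n x v}},
      (denseGraph d m n x).Adj z₁ z₂ →
      ∀ k, (z₁.1 k : ℕ) ≤ (z₂.1 k : ℕ) + 1 ∧ (z₂.1 k : ℕ) ≤ (z₁.1 k : ℕ) + 1 := by
    intro z₁ z₂ hadj k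
    rw [denseGraph, SimpleGraph.fromRel_adj] at hadj
    rcases hadj.2 with hf | hf
    · exact (isFriend_iff d m hm _ _).mp hf k
    · have := (isFriend_iff d m hm _ _).mp hf k
      exact ⟨this.2, this.1⟩
  -- intermediate values
  have hIcc : ∀ k, ∀ c : ℕ, a k ≤ c → c ≤ b k → ∃ z ∈ F, (z.1 k : ℕ) = c := by
    intro k c hac hcb
    obtain ⟨u, huF, hu⟩ := Finset.mem_image.mp
      ((F.image (fun z => (z.1 k : ℕ))).min'_mem (hAne k))
    obtain ⟨w, hwF, hw⟩ := Finset.mem_image.mp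
      ((F.image (fun z => (z.1 k : ℕ))).max'_mem (hAne k))
    have hreach : (denseGraph d m n x).Reachable u w :=
      SimpleGraph.ConnectedComponent.exact (((hFS u).1 huF).trans ((hFS w).1 hwF).symm)
    obtain ⟨p⟩ := hreach
    obtain ⟨z, hzsup, hzc⟩ := walk_intermediate (fun z => (z.1 k : ℕ))
      (fun hadj => (hadjco hadj k).2) p c
      (by show (u.1 k : ℕ) ≤ c; rw [hu]; exact hac)
      (by show c ≤ (w.1 k : ℕ); rw [hw]; exact hcb)
    refine ⟨z, ?_, hzc⟩
    rw [hFS]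
    rw [mem_support_component p hzsup, (hFS u).1 huF]
  -- card bound : b k + 1 ≤ card + a k
  have hcard : ∀ k, b k + 1 ≤ F.card + a k := by
    intro k
    have hchoice : ∀ c : ℕ, ∃ z, c ∈ Finset.Icc (a k) (b k) → z ∈ F ∧ (z.1 k : ℕ) = c := by
      intro c
      by_cases hc : c ∈ Finset.Icc (a k) (b k)
      · rw [Finset.mem_Icc] at hc
        obtain ⟨z, hz1, hz2⟩ := hIcc k c hc.1 hc.2
        exact ⟨z, fun _ => ⟨hz1, hz2⟩⟩
      · exact ⟨v₀, fun h => absurd h hc⟩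
    choose g hg using hchoice
    have hcc : (Finset.Icc (a k) (b k)).card ≤ F.card := by
      apply Finset.card_le_card_of_injOn g
      · intro c hc; exact (hg c hc).1
      · intro c1 h1 c2 h2 heq
        have e1 := (hg c1 h1).2
        have e2 := (hg c2 h2).2
        rw [← e1, ← e2, heq]
    rw [Nat.card_Icc] at hcc
    have := hab k
    omega
  -- direction choice
  have hdir : ∀ k : Fin d, (b k + 1 < m) ∨ (1 ≤ a k) := by
    intro k
    by_cases hk : b k + 1 < m
    · exact Or.inl hk
    · right
      have := hbm k
      have := hcard k
      omega
  -- max weight vertex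
  set W : {v : Fin d → Fin m // ¬ IsSparse d m n x v} → ℤ :=
    fun z => ∑ k : Fin d, (if b k + 1 < m then (z.1 k : ℤ) else -(z.1 k : ℤ)) with hWdef
  obtain ⟨vM, hvMF, hvMmax⟩ := F.exists_max_image W hFne
  -- the step values
  have hstep_lt : ∀ k : Fin d, (if b k + 1 < m then (vM.1 k : ℕ) + 1 else (vM.1 k : ℕ) - 1) < m := by
    intro k
    by_cases hk : b k + 1 < m
    · rw [if_pos hk]
      have := hzb k vM hvMF
      omega
    · rw [if_neg hk]
      have := (vM.1 k).isLt
      omega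
  have hminus : ∀ k : Fin d, ¬ (b k + 1 < m) → 1 ≤ (vM.1 k : ℕ) := by
    intro k hk
    rcases hdir k with h | h
    · exact absurd h hk
    · exact h.trans (haz k vM hvMF)
  -- the candidate sparse cells
  set wc : (Fin d → Bool) → (Fin d → Fin m) := fun ε k =>
    if ε k then ⟨if b k + 1 < m then (vM.1 k : ℕ) + 1 else (vM.1 k : ℕ) - 1, hstep_lt k⟩
    else vM.1 k with hwcdef
  have hwc_val : ∀ ε k, ((wc ε k : ℕ)) =
      if ε k then (if b k + 1 < m then (vM.1 k : ℕ) + 1 else (vM.1 k : ℕ) - 1)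
      else (vM.1 k : ℕ) := by
    intro ε k
    rw [hwcdef]
    by_cases hε : ε k <;> simp [hε]
  have hwc_ne : ∀ ε k, ε k = true → (wc ε k : ℕ) ≠ (vM.1 k : ℕ) := by
    intro ε k hε
    rw [hwc_val, if_pos hε]
    by_cases hk : b k + 1 < m
    · rw [if_pos hk]; omega
    · rw [if_neg hk]
      have := hminus k hk
      omega
  -- friendship
  have hwc_friend : ∀ ε, IsFriend d m (wc ε) vM.1 := by
    intro ε
    rw [isFriend_iff d m hm]
    intro k
    rw [hwc_val]
    by_cases hε : ε k
    · rw [if_pos hε]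
      by_cases hk : b k + 1 < m
      · rw [if_pos hk]; omega
      · rw [if_neg hk]
        have := hminus k hk
        omega
    · rw [if_neg hε]; omega
  -- sparsity
  have hwc_sparse : ∀ ε : Fin d → Bool, ε ≠ (fun _ => false) → IsSparse d m n x (wc ε) := by
    intro ε hεne
    by_contra hdense
    obtain ⟨k₀, hk₀⟩ : ∃ k, ε k = true := by
      by_contra hc
      push_neg at hc
      exact hεne (funext fun k => by simpa using hc k)
    have hne : (⟨wc ε, hdense⟩ : {v : Fin d → Fin m // ¬ IsSparse d m n x v}) ≠ vM := by
      intro hcon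
      have : wc ε = vM.1 := congrArg Subtype.val hcon
      have := congrFun this k₀
      exact hwc_ne ε k₀ hk₀ (congrArg Fin.val this)
    have hadj : (denseGraph d m n x).Adj ⟨wc ε, hdense⟩ vM := by
      rw [denseGraph, SimpleGraph.fromRel_adj]
      exact ⟨hne, Or.inl (hwc_friend ε)⟩
    have hmem : (⟨wc ε, hdense⟩ : {v : Fin d → Fin m // ¬ IsSparse d m n x v}) ∈ F := by
      rw [hFS]
      rw [SimpleGraph.ConnectedComponent.sound hadj.reachable]
      exact (hFS vM).1 hvMF
    have hle := hvMmax _ hmem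
    have hlt : W vM < W (⟨wc ε, hdense⟩ : {v : Fin d → Fin m // ¬ IsSparse d m n x v}) := by
      rw [hWdef]
      apply Finset.sum_lt_sum
      · intro k _
        by_cases hk : b k + 1 < m
        · rw [if_pos hk, if_pos hk]
          have : (vM.1 k : ℕ) ≤ ((wc ε k : ℕ)) := by
            rw [hwc_val]
            by_cases hε : ε k
            · rw [if_pos hε, if_pos hk]; omega
            · rw [if_neg hε]
          exact_mod_cast this
        · rw [if_neg hk, if_neg hk]
          have : ((wc ε k : ℕ)) ≤ (vM.1 k : ℕ) := by
            rw [hwc_val]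
            by_cases hε : ε k
            · rw [if_pos hε, if_neg hk]; omega
            · rw [if_neg hε]
          have h2 : ((wc ε k : ℤ)) ≤ (vM.1 k : ℤ) := by exact_mod_cast this
          exact neg_le_neg h2
      · refine ⟨k₀, Finset.mem_univ _, ?_⟩
        by_cases hk : b k₀ + 1 < m
        · rw [if_pos hk, if_pos hk]
          have : (vM.1 k₀ : ℕ) < ((wc ε k₀ : ℕ)) := by
            rw [hwc_val, if_pos hk₀, if_pos hk]; omega
          exact_mod_cast this
        · rw [if_neg hk, if_neg hk]
          have : ((wc ε k₀ : ℕ)) < (vM.1 k₀ : ℕ) := by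
            rw [hwc_val, if_pos hk₀, if_neg hk]
            have := hminus k₀ hk
            omega
          have h2 : ((wc ε k₀ : ℤ)) < (vM.1 k₀ : ℤ) := by exact_mod_cast this
          exact neg_lt_neg h2
    exact absurd hle (not_le.mpr hlt)
  -- injectivity
  have hwc_inj : Function.Injective wc := by
    intro ε1 ε2 heq
    funext k
    by_contra hne
    have h1 := congrFun heq k
    rcases Bool.eq_false_or_eq_true (ε1 k) with he1 | he1 <;>
      rcases Bool.eq_false_or_eq_true (ε2 k) with he2 | he2
    · exact hne (he1.trans he2.symm)
    · have hv2 : (wc ε2 k : ℕ) = (vM.1 k : ℕ) := by rw [hwc_val, if_neg (by simp [he2])]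
      exact hwc_ne ε1 k he1 (by rw [congrArg Fin.val h1]; exact hv2)
    · have hv1 : (wc ε1 k : ℕ) = (vM.1 k : ℕ) := by rw [hwc_val, if_neg (by simp [he1])]
      exact hwc_ne ε2 k he2 (by rw [← congrArg Fin.val h1]; exact hv1)
    · exact hne (he1.trans he2.symm)
  -- conclusion
  have hmain : ({ε : Fin d → Bool | ε ≠ (fun _ => false)}).ncard ≤
      ({w : Fin d → Fin m | IsSparse d m n x w ∧
        ∃ c : {v : Fin d → Fin m // ¬ IsSparse d m n x v},
          (denseGraph d m n x).connectedComponentMk c = γ ∧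
          IsFriend d m w c.1}).ncard := by
    apply Set.ncard_le_ncard_of_injOn wc
    · intro ε hε
      exact ⟨hwc_sparse ε hε, vM, (hFS vM).1 hvMF, hwc_friend ε⟩
    · exact hwc_inj.injOn
  have hcount : ({ε : Fin d → Bool | ε ≠ (fun _ => false)}).ncard = 2^d - 1 := by
    have : {ε : Fin d → Bool | ε ≠ (fun _ => false)} =
        Set.univ \ {(fun _ => false : Fin d → Bool)} := by
      ext ε; simp
    rw [this, Set.ncard_diff (Set.subset_univ _), Set.ncard_univ, Set.ncard_singleton,
      Nat.card_eq_fintype_card, Fintype.card_fun]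
    simp
  omega
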